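/- Let n be a natural number with 2 ≤ n. If α and β are ordinals with α < ω_{n+1} and β < ω_n, then (α^ω)^{⊙β} < ω_{n+1}, where (α^ω)^{⊙β} is the β-fold iterated Hessenberg product of α^ω. -/

import Mathlib

universe u

namespace Ordinal

open Order Set

/-- Natural (Hessenberg) addition of ordinals, as formerly in Mathlib's
`Mathlib.SetTheory.Ordinal.NaturalOps` (since removed from Mathlib). -/
noncomputable def nadd (a b : Ordinal.{u}) : Ordinal.{u} :=
  max (⨆ x : Iio a, succ (nadd x.1 b)) (⨆ x : Iio b, succ (nadd a x.1))
termination_by (a, b)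
decreasing_by all_goals cases x; decreasing_tactic

/-- Natural (Hessenberg) multiplication of ordinals, as formerly in Mathlib's
`Mathlib.SetTheory.Ordinal.NaturalOps` (since removed from Mathlib). -/
noncomputable def nmul (a b : Ordinal.{u}) : Ordinal.{u} :=
  sInf {c | ∀ a' < a, ∀ b' < b, nadd (nmul a' b) (nmul a b') < nadd c (nmul a' b')}
termination_by (a, b)

end Ordinal

/-- The `β`-fold iterated Hessenberg (natural) product of `α`:
`α^{⊙0} = 1`, `α^{⊙(β+1)} = α^{⊙β} ⊙ α`, and
`α^{⊙λ} = sup_{β<λ} α^{⊙β}` for `λ` a limit ordinal. -/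
noncomputable def iterNmul (α β : Ordinal) : Ordinal :=
  Ordinal.limitRecOn β 1 (fun _ ih => Ordinal.nmul ih α)
    (fun b _ ih => ⨆ γ : Set.Iio b, ih γ.1 γ.2)

/-- The tower of ordinals `ω_0 = 1`, `ω_{n+1} = ω^{ω_n}`. -/
noncomputable def omegaTower : ℕ → Ordinal
  | 0 => 1
  | n + 1 => Ordinal.omega0 ^ omegaTower n

namespace NaturalOps
end NaturalOps

infixl:65 " ♯ " => Ordinal.nadd
infixl:70 " ⨳ " => Ordinal.nmul

namespace Ordinal

theorem nadd_def (a b : Ordinal.{u}) : a ♯ b =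
    max (⨆ x : Set.Iio a, Order.succ (x.1 ♯ b)) (⨆ x : Set.Iio b, Order.succ (a ♯ x.1)) := by
  rw [nadd]

theorem lt_nadd_iff {a b c : Ordinal.{u}} :
    a < b ♯ c ↔ (∃ b' < b, a ≤ b' ♯ c) ∨ ∃ c' < c, a ≤ b ♯ c' := by
  rw [nadd_def]
  simp [Ordinal.lt_iSup_iff, Order.lt_succ_iff]

theorem nadd_le_iff {a b c : Ordinal.{u}} :
    b ♯ c ≤ a ↔ (∀ b' < b, b' ♯ c < a) ∧ ∀ c' < c, b ♯ c' < a := by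
  rw [← not_lt, lt_nadd_iff]; simp

theorem nadd_lt_nadd_left {b c : Ordinal.{u}} (h : b < c) (a : Ordinal.{u}) : a ♯ b < a ♯ c :=
  lt_nadd_iff.2 (Or.inr ⟨b, h, le_rfl⟩)

theorem nadd_lt_nadd_right {b c : Ordinal.{u}} (h : b < c) (a : Ordinal.{u}) : b ♯ a < c ♯ a :=
  lt_nadd_iff.2 (Or.inl ⟨b, h, le_rfl⟩)

theorem nadd_le_nadd_left {b c : Ordinal.{u}} (h : b ≤ c) (a : Ordinal.{u}) : a ♯ b ≤ a ♯ c := by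
  rcases h.lt_or_eq with h | rfl
  · exact (nadd_lt_nadd_left h a).le
  · exact le_rfl

theorem nadd_le_nadd_right {b c : Ordinal.{u}} (h : b ≤ c) (a : Ordinal.{u}) : b ♯ a ≤ c ♯ a := by
  rcases h.lt_or_eq with h | rfl
  · exact (nadd_lt_nadd_right h a).le
  · exact le_rfl

theorem nadd_lt_nadd_of_le_of_lt {a b c d : Ordinal.{u}} (h₁ : a ≤ b) (h₂ : c < d) :
    a ♯ c < b ♯ d :=
  (nadd_le_nadd_right h₁ c).trans_lt (nadd_lt_nadd_left h₂ b)

theorem nadd_lt_nadd_iff_right {b c : Ordinal.{u}} (a : Ordinal.{u}) : b ♯ a < c ♯ a ↔ b < c :=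
  ⟨fun h => by
    by_contra h'
    exact absurd h (not_lt.2 (nadd_le_nadd_right (not_lt.1 h') a)),
   fun h => nadd_lt_nadd_right h a⟩

theorem nadd_comm (a b : Ordinal.{u}) : a ♯ b = b ♯ a := by
  induction a using Ordinal.induction generalizing b with
  | _ a iha =>
  induction b using Ordinal.induction with
  | _ b ihb =>
  rw [nadd_def, nadd_def b a, max_comm]
  congr 1
  · congr 1; funext x; rw [ihb x.1 x.2]
  · congr 1; funext x; rw [iha x.1 x.2]

@[simp] theorem nadd_zero (a : Ordinal.{u}) : a ♯ 0 = a := by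
  induction a using Ordinal.induction with
  | _ a ih =>
  apply le_antisymm
  · rw [nadd_le_iff]
    refine ⟨fun b hb => ?_, fun c hc => absurd hc (not_lt.2 zero_le)⟩
    rw [ih b hb]; exact hb
  · refine le_of_forall_lt fun c hc => ?_
    rw [← ih c hc]
    exact nadd_lt_nadd_right hc 0

@[simp] theorem zero_nadd (a : Ordinal.{u}) : 0 ♯ a = a := by
  rw [nadd_comm, nadd_zero]

theorem nadd_one (a : Ordinal.{u}) : a ♯ 1 = Order.succ a := by
  induction a using Ordinal.induction with
  | _ a ih =>
  apply le_antisymm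
  · rw [nadd_le_iff]
    refine ⟨fun b hb => ?_, fun c hc => ?_⟩
    · rw [ih b hb]; exact Order.succ_lt_succ_iff.2 hb
    · rw [Ordinal.lt_one_iff_zero] at hc; subst hc; rw [nadd_zero]; exact Order.lt_succ a
  · rw [Order.succ_le_iff]
    calc a = a ♯ 0 := (nadd_zero a).symm
      _ < a ♯ 1 := nadd_lt_nadd_left zero_lt_one a

theorem le_self_nadd {a b : Ordinal.{u}} : a ≤ a ♯ b :=
  calc a = a ♯ 0 := (nadd_zero a).symm
    _ ≤ a ♯ b := nadd_le_nadd_left zero_le a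

theorem nadd_assoc (a b c : Ordinal.{u}) : a ♯ b ♯ c = a ♯ (b ♯ c) := by
  induction a using Ordinal.induction generalizing b c with
  | _ a iha =>
  induction b using Ordinal.induction generalizing c with
  | _ b ihb =>
  induction c using Ordinal.induction with
  | _ c ihc =>
  apply le_antisymm
  · rw [nadd_le_iff]
    refine ⟨fun d hd => ?_, fun c' hc' => ?_⟩
    · rcases lt_nadd_iff.1 hd with ⟨a', ha', hd'⟩ | ⟨b', hb', hd'⟩
      · calc d ♯ c ≤ a' ♯ b ♯ c := nadd_le_nadd_right hd' c
          _ = a' ♯ (b ♯ c) := iha a' ha' b c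
          _ < a ♯ (b ♯ c) := nadd_lt_nadd_right ha' _
      · calc d ♯ c ≤ a ♯ b' ♯ c := nadd_le_nadd_right hd' c
          _ = a ♯ (b' ♯ c) := ihb b' hb' c
          _ < a ♯ (b ♯ c) := nadd_lt_nadd_left (nadd_lt_nadd_right hb' c) a
    · rw [ihc c' hc']
      exact nadd_lt_nadd_left (nadd_lt_nadd_left hc' b) a
  · rw [nadd_le_iff]
    refine ⟨fun a' ha' => ?_, fun d hd => ?_⟩
    · rw [← iha a' ha' b c]
      exact nadd_lt_nadd_right (nadd_lt_nadd_right ha' b) c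
    · rcases lt_nadd_iff.1 hd with ⟨b', hb', hd'⟩ | ⟨c', hc', hd'⟩
      · calc a ♯ d ≤ a ♯ (b' ♯ c) := nadd_le_nadd_left hd' a
          _ = a ♯ b' ♯ c := (ihb b' hb' c).symm
          _ < a ♯ b ♯ c := nadd_lt_nadd_right (nadd_lt_nadd_left hb' a) c
      · calc a ♯ d ≤ a ♯ (b ♯ c') := nadd_le_nadd_left hd' a
          _ = a ♯ b ♯ c' := (ihc c' hc').symm
          _ < a ♯ b ♯ c := nadd_lt_nadd_left hc' _

theorem nadd_left_comm (a b c : Ordinal.{u}) : a ♯ (b ♯ c) = b ♯ (a ♯ c) := by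
  rw [← nadd_assoc, nadd_comm a b, nadd_assoc]

instance nadd_std_assoc : Std.Associative (α := Ordinal.{u}) nadd := ⟨nadd_assoc⟩

instance nadd_std_comm : Std.Commutative (α := Ordinal.{u}) nadd := ⟨nadd_comm⟩

theorem lt_of_nadd_lt_nadd_of_eq {x y l r k : Ordinal.{u}} (h : x < y) (hx : x = l ♯ k)
    (hy : y = r ♯ k) : l < r :=
  (nadd_lt_nadd_iff_right k).1 (hx ▸ hy ▸ h)

theorem add_le_nadd (a b : Ordinal.{u}) : a + b ≤ a ♯ b := by
  induction b using Ordinal.limitRecOn with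
  | zero => simp
  | add_one c h =>
    have e : a ♯ (c + 1) = Order.succ (a ♯ c) := by
      rw [show c + 1 = Order.succ c from rfl, ← nadd_one c, ← nadd_assoc, nadd_one]
    rw [e, ← add_assoc]
    exact Order.succ_le_succ h
  | limit c hc H =>
    rw [add_le_iff_of_isSuccLimit hc]
    intro d hd
    exact (H d hd).trans (nadd_le_nadd_left hd.le a)

theorem nmul_nonempty (a b : Ordinal.{u}) :
    {c : Ordinal.{u} | ∀ a' < a, ∀ b' < b, a' ⨳ b ♯ a ⨳ b' < c ♯ a' ⨳ b'}.Nonempty := by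
  refine ⟨⨆ p : Set.Iio a × Set.Iio b, Order.succ (p.1.1 ⨳ b ♯ a ⨳ p.2.1), ?_⟩
  simp only [Set.mem_setOf_eq]
  intro a' ha' b' hb'
  calc a' ⨳ b ♯ a ⨳ b' < Order.succ (a' ⨳ b ♯ a ⨳ b') := Order.lt_succ _
    _ ≤ ⨆ p : Set.Iio a × Set.Iio b, Order.succ (p.1.1 ⨳ b ♯ a ⨳ p.2.1) :=
        Ordinal.le_iSup (fun p : Set.Iio a × Set.Iio b => Order.succ (p.1.1 ⨳ b ♯ a ⨳ p.2.1))
          (⟨a', ha'⟩, ⟨b', hb'⟩)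
    _ ≤ _ := le_self_nadd

theorem nmul_nadd_lt {a b a' b' : Ordinal.{u}} (ha : a' < a) (hb : b' < b) :
    a' ⨳ b ♯ a ⨳ b' < a ⨳ b ♯ a' ⨳ b' := by
  have h := csInf_mem (nmul_nonempty a b)
  have e : a ⨳ b = sInf {c : Ordinal.{u} | ∀ a' < a, ∀ b' < b,
      a' ⨳ b ♯ a ⨳ b' < c ♯ a' ⨳ b'} := by
    rw [nmul]
  rw [e]; exact h a' ha b' hb

theorem nmul_nadd_le {a b a' b' : Ordinal.{u}} (ha : a' ≤ a) (hb : b' ≤ b) :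
    a' ⨳ b ♯ a ⨳ b' ≤ a ⨳ b ♯ a' ⨳ b' := by
  rcases ha.lt_or_eq with ha | rfl
  · rcases hb.lt_or_eq with hb | rfl
    · exact (nmul_nadd_lt ha hb).le
    · rw [nadd_comm]
  · exact le_rfl

theorem nmul_le_iff {a b c : Ordinal.{u}} :
    a ⨳ b ≤ c ↔ ∀ a' < a, ∀ b' < b, a' ⨳ b ♯ a ⨳ b' < c ♯ a' ⨳ b' := by
  refine ⟨fun h a' ha b' hb => (nmul_nadd_lt ha hb).trans_le (nadd_le_nadd_right h _),
    fun H => ?_⟩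
  rw [nmul]; exact csInf_le' H

theorem lt_nmul_iff {a b c : Ordinal.{u}} :
    c < a ⨳ b ↔ ∃ a' < a, ∃ b' < b, c ♯ a' ⨳ b' ≤ a' ⨳ b ♯ a ⨳ b' := by
  refine ⟨fun h => ?_, fun ⟨a', ha, b', hb, h⟩ => ?_⟩
  · by_contra H
    push_neg at H
    exact absurd h (not_lt.2 (nmul_le_iff.2 H))
  · exact (nadd_lt_nadd_iff_right (a' ⨳ b')).1 (h.trans_lt (nmul_nadd_lt ha hb))

theorem nmul_comm (a b : Ordinal.{u}) : a ⨳ b = b ⨳ a := by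
  induction a using Ordinal.induction generalizing b with
  | _ a iha =>
  induction b using Ordinal.induction with
  | _ b ihb =>
  apply le_antisymm
  · rw [nmul_le_iff]
    intro a' ha b' hb
    rw [iha a' ha b, ihb b' hb, iha a' ha b', nadd_comm (b ⨳ a')]
    exact nmul_nadd_lt hb ha
  · rw [nmul_le_iff]
    intro b' hb a' ha
    rw [← ihb b' hb, ← iha a' ha b, ← iha a' ha b', nadd_comm (a ⨳ b')]
    exact nmul_nadd_lt ha hb

@[simp] theorem nmul_zero (a : Ordinal.{u}) : a ⨳ 0 = 0 :=
  le_antisymm (nmul_le_iff.2 fun _ _ b' hb' => absurd hb' (not_lt.2 zero_le)) zero_le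

@[simp] theorem zero_nmul (a : Ordinal.{u}) : 0 ⨳ a = 0 := by
  rw [nmul_comm, nmul_zero]

theorem nmul_lt_nmul_of_pos_left {a b c : Ordinal.{u}} (h₁ : a < b) (h₂ : 0 < c) :
    c ⨳ a < c ⨳ b :=
  lt_nmul_iff.2 ⟨0, h₂, a, h₁, by simp⟩

theorem nmul_lt_nmul_of_pos_right {a b c : Ordinal.{u}} (h₁ : a < b) (h₂ : 0 < c) :
    a ⨳ c < b ⨳ c :=
  lt_nmul_iff.2 ⟨a, h₁, 0, h₂, by simp⟩

@[simp] theorem nmul_one (a : Ordinal.{u}) : a ⨳ 1 = a := by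
  induction a using Ordinal.induction with
  | _ a ih =>
  apply le_antisymm
  · rw [nmul_le_iff]
    intro a' ha b' hb
    rw [Ordinal.lt_one_iff_zero] at hb; subst hb
    simpa [ih a' ha] using ha
  · refine le_of_forall_lt fun c hc => ?_
    rw [← ih c hc]
    exact nmul_lt_nmul_of_pos_right hc zero_lt_one

theorem nmul_le_nmul_left {a b : Ordinal.{u}} (h : a ≤ b) (c : Ordinal.{u}) : c ⨳ a ≤ c ⨳ b := by
  rcases h.lt_or_eq with h | rfl
  · rcases eq_or_ne c 0 with rfl | hc
    · simp
    · exact (nmul_lt_nmul_of_pos_left h (pos_iff_ne_zero.2 hc)).le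
  · exact le_rfl

theorem nmul_le_nmul_right {a b : Ordinal.{u}} (h : a ≤ b) (c : Ordinal.{u}) :
    a ⨳ c ≤ b ⨳ c := by
  rw [nmul_comm, nmul_comm b]; exact nmul_le_nmul_left h c

theorem nmul_nadd (a b c : Ordinal.{u}) : a ⨳ (b ♯ c) = a ⨳ b ♯ a ⨳ c := by
  induction a using Ordinal.induction generalizing b c with
  | _ a iha =>
  induction b using Ordinal.induction generalizing c with
  | _ b ihb =>
  induction c using Ordinal.induction with
  | _ c ihc =>
  apply le_antisymm
  · rw [nmul_le_iff]
    intro a' ha d hd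
    rw [iha a' ha b c]
    rcases lt_nadd_iff.1 hd with ⟨b', hb, hd⟩ | ⟨c', hc, hd⟩
    · have h := nadd_lt_nadd_of_le_of_lt (nmul_nadd_le ha.le hd) (nmul_nadd_lt ha hb)
      rw [iha a' ha b' c, ihb b' hb c] at h
      exact lt_of_nadd_lt_nadd_of_eq h (k := a' ⨳ b' ♯ a ⨳ b') (by ac_rfl) (by ac_rfl)
    · have h := nadd_lt_nadd_of_le_of_lt (nmul_nadd_le ha.le hd) (nmul_nadd_lt ha hc)
      rw [iha a' ha b c', ihc c' hc] at h
      exact lt_of_nadd_lt_nadd_of_eq h (k := a' ⨳ c' ♯ a ⨳ c') (by ac_rfl) (by ac_rfl)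
  · rw [nadd_le_iff]
    refine ⟨fun d hd => ?_, fun d hd => ?_⟩
    · obtain ⟨a', ha, b', hb, hd⟩ := lt_nmul_iff.1 hd
      have h := nadd_lt_nadd_of_le_of_lt hd (nmul_nadd_lt ha (nadd_lt_nadd_right hb c))
      rw [iha a' ha b c, ihb b' hb c, iha a' ha b' c] at h
      exact lt_of_nadd_lt_nadd_of_eq h (k := a' ⨳ b' ♯ a' ⨳ b ♯ a' ⨳ c ♯ a ⨳ b')
        (by ac_rfl) (by ac_rfl)
    · obtain ⟨a', ha, c', hc, hd⟩ := lt_nmul_iff.1 hd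
      have h := nadd_lt_nadd_of_le_of_lt hd (nmul_nadd_lt ha (nadd_lt_nadd_left hc b))
      rw [iha a' ha b c, ihc c' hc, iha a' ha b c'] at h
      exact lt_of_nadd_lt_nadd_of_eq h (k := a' ⨳ c' ♯ a' ⨳ b ♯ a' ⨳ c ♯ a ⨳ c')
        (by ac_rfl) (by ac_rfl)

theorem nadd_nmul (a b c : Ordinal.{u}) : (a ♯ b) ⨳ c = a ⨳ c ♯ b ⨳ c := by
  rw [nmul_comm, nmul_nadd, nmul_comm c a, nmul_comm c b]

theorem nmul_succ (a b : Ordinal.{u}) : a ⨳ Order.succ b = a ⨳ b ♯ a := by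
  rw [← nadd_one, nmul_nadd, nmul_one]

theorem mul_le_nmul (a b : Ordinal.{u}) : a * b ≤ a ⨳ b := by
  induction b using Ordinal.limitRecOn with
  | zero => simp
  | add_one c h =>
    rw [mul_add_one, show c + 1 = Order.succ c from rfl, nmul_succ]
    exact (add_le_nadd _ _).trans (nadd_le_nadd_right h a)
  | limit c hc H =>
    rw [mul_le_iff_of_isSuccLimit hc]
    intro d hd
    exact (H d hd).trans (nmul_le_nmul_left hd.le a)

end Ordinal

open Ordinal
open scoped NaturalOps Ordinal


namespace IterNmulAux

/-- Key structural lemma: natural addition on multiples of `ω^c` plus a small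
remainder behaves like ordinary addition. -/
theorem nadd_opow_mul_aux (c : Ordinal)
    (hA : ∀ x < ω ^ c, ∀ y < ω ^ c, x ♯ y < ω ^ c) :
    ∀ (N j i : ℕ), j + i ≤ N → ∀ r < ω ^ c,
      ω ^ c * j ♯ (ω ^ c * i + r) = ω ^ c * (j + i : ℕ) + r := by
  have hc0 : (ω ^ c) ≠ 0 := (opow_pos c omega0_pos).ne'
  intro N
  induction N with
  | zero =>
    intro j i hji r hr
    obtain ⟨rfl, rfl⟩ : j = 0 ∧ i = 0 := by omega
    simpa using (zero_nadd r)
  | succ N ihN =>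
    intro j i hji r
    rcases le_or_gt (j + i) N with hle | hgt
    · exact ihN j i hle r
    have hji' : j + i = N + 1 := by omega
    induction r using Ordinal.induction with
    | _ r ihr =>
    intro hr
    apply le_antisymm
    · rw [nadd_le_iff]
      constructor
      · -- ∀ x < ω^c * j, x ♯ (ω^c*i + r) < ω^c*(j+i) + r
        intro x hx
        have hj : j ≠ 0 := by
          rintro rfl
          simp only [Nat.cast_zero, mul_zero] at hx
          exact absurd hx (not_lt.2 zero_le)
        have hxeq : ω ^ c * (x / ω ^ c) + x % ω ^ c = x := Ordinal.div_add_mod x (ω ^ c)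
        set s := x % ω ^ c with hsdef
        have hs : s < ω ^ c := Ordinal.mod_lt x hc0
        have hj₁lt : x / ω ^ c < (j : Ordinal) := (Ordinal.div_lt hc0).2 hx
        obtain ⟨j₁, hj₁⟩ := Ordinal.lt_omega0.1 (hj₁lt.trans (nat_lt_omega0 j))
        rw [hj₁] at hj₁lt hxeq
        have hj₁n : j₁ < j := by exact_mod_cast hj₁lt
        have hw : r ♯ s < ω ^ c := hA r hr s hs
        calc x ♯ (ω ^ c * i + r)
            ≤ (ω ^ c * j₁ ♯ s) ♯ (ω ^ c * i + r) := by
              refine nadd_le_nadd_right ?_ _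
              rw [← hxeq]; exact add_le_nadd _ _
          _ = ω ^ c * j₁ ♯ (s ♯ (ω ^ c * i + r)) := nadd_assoc _ _ _
          _ ≤ ω ^ c * j₁ ♯ (s ♯ (ω ^ c * i ♯ r)) :=
              nadd_le_nadd_left (nadd_le_nadd_left (add_le_nadd _ _) _) _
          _ = ω ^ c * j₁ ♯ (ω ^ c * i + (r ♯ s)) := by
              have h0 := ihN i 0 (by omega) (r ♯ s) hw
              simp only [Nat.cast_zero, mul_zero, zero_add, Nat.add_zero] at h0
              rw [nadd_left_comm s, nadd_comm s r, h0]
          _ = ω ^ c * (j₁ + i : ℕ) + (r ♯ s) := ihN j₁ i (by omega) _ hw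
          _ < ω ^ c * (j₁ + i : ℕ) + ω ^ c := add_lt_add_right hw _
          _ = ω ^ c * (j₁ + i + 1 : ℕ) := by
              rw [show ((j₁ + i + 1 : ℕ) : Ordinal) = ((j₁ + i : ℕ) : Ordinal) + 1 from by
                push_cast; ring, mul_add_one]
          _ ≤ ω ^ c * (j + i : ℕ) := mul_le_mul_right (by exact_mod_cast (by omega : j₁ + i + 1 ≤ j + i)) _
          _ ≤ ω ^ c * (j + i : ℕ) + r := le_self_add
      · -- ∀ y < ω^c*i + r, ω^c*j ♯ y < ω^c*(j+i) + r
        intro y hy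
        have hyeq : ω ^ c * (y / ω ^ c) + y % ω ^ c = y := Ordinal.div_add_mod y (ω ^ c)
        set t := y % ω ^ c with htdef
        have ht : t < ω ^ c := Ordinal.mod_lt y hc0
        have hy' : y < ω ^ c * ((i : Ordinal) + 1) := by
          calc y < ω ^ c * i + r := hy
            _ < ω ^ c * i + ω ^ c := add_lt_add_right hr _
            _ = ω ^ c * ((i : Ordinal) + 1) := (mul_add_one _ _).symm
        have hi₁lt : y / ω ^ c < (i : Ordinal) + 1 := (Ordinal.div_lt hc0).2 hy'
        obtain ⟨i₁, hi₁⟩ := Ordinal.lt_omega0.1 (hi₁lt.trans_le (by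
          exact_mod_cast (nat_lt_omega0 (i+1)).le))
        rw [hi₁] at hi₁lt hyeq
        have hi₁n : i₁ ≤ i := by
          have : i₁ < i + 1 := by exact_mod_cast hi₁lt
          omega
        rcases eq_or_lt_of_le hi₁n with rfl | hi₁i
        · -- i₁ = i : then t < r
          have htr : t < r := by
            have := hyeq.symm ▸ hy
            exact (add_lt_add_iff_left _).1 this
          rw [← hyeq, ihr t htr (ht.trans_le le_rfl)]
          exact add_lt_add_right htr _
        · rw [← hyeq, ihN j i₁ (by omega) t ht]
          calc ω ^ c * (j + i₁ : ℕ) + t < ω ^ c * (j + i₁ : ℕ) + ω ^ c := add_lt_add_right ht _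
            _ = ω ^ c * (j + i₁ + 1 : ℕ) := by
              rw [show ((j + i₁ + 1 : ℕ) : Ordinal) = ((j + i₁ : ℕ) : Ordinal) + 1 from by
                push_cast; ring, mul_add_one]
            _ ≤ ω ^ c * (j + i : ℕ) := mul_le_mul_right (by exact_mod_cast (by omega : j + i₁ + 1 ≤ j + i)) _
            _ ≤ ω ^ c * (j + i : ℕ) + r := le_self_add
    · rw [Nat.cast_add, mul_add, add_assoc]
      exact add_le_nadd _ _

end IterNmulAux

namespace IterNmulAux

open Ordinal
open scoped NaturalOps Ordinal

/-- `ω ^ γ` is closed under natural addition. -/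
theorem nadd_lt_opow (γ : Ordinal) :
    ∀ a < ω ^ γ, ∀ b < ω ^ γ, a ♯ b < ω ^ γ := by
  induction γ using Ordinal.limitRecOn with
  | zero =>
    intro a ha b hb
    rw [opow_zero] at *
    rw [Ordinal.lt_one_iff_zero] at ha hb
    subst ha; subst hb
    simpa using Ordinal.zero_lt_one
  | add_one c ih =>
    intro a ha b hb
    have hc0 : (ω ^ c) ≠ 0 := (opow_pos c omega0_pos).ne'
    rw [opow_add_one] at ha hb ⊢
    obtain ⟨r, hr, j, rfl⟩ : ∃ r, r < ω ^ c ∧ ∃ j : ℕ, a = ω ^ c * j + r := by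
      obtain ⟨j, hj⟩ := Ordinal.lt_omega0.1 ((Ordinal.div_lt hc0).2 ha)
      exact ⟨a % ω ^ c, Ordinal.mod_lt a hc0, j, by
        conv_lhs => rw [← Ordinal.div_add_mod a (ω ^ c), hj]⟩
    obtain ⟨s, hs, i, rfl⟩ : ∃ s, s < ω ^ c ∧ ∃ i : ℕ, b = ω ^ c * i + s := by
      obtain ⟨i, hi⟩ := Ordinal.lt_omega0.1 ((Ordinal.div_lt hc0).2 hb)
      exact ⟨b % ω ^ c, Ordinal.mod_lt b hc0, i, by
        conv_lhs => rw [← Ordinal.div_add_mod b (ω ^ c), hi]⟩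
    have hw : s ♯ r < ω ^ c := ih _ hs _ hr
    have key : (ω ^ c * j + r) ♯ (ω ^ c * i + s) ≤ ω ^ c * (j + i : ℕ) + (s ♯ r) := by
      calc (ω ^ c * j + r) ♯ (ω ^ c * i + s)
          ≤ (ω ^ c * j ♯ r) ♯ (ω ^ c * i + s) := nadd_le_nadd_right (add_le_nadd _ _) _
        _ = ω ^ c * j ♯ (r ♯ (ω ^ c * i + s)) := nadd_assoc _ _ _
        _ ≤ ω ^ c * j ♯ (r ♯ (ω ^ c * i ♯ s)) :=
            nadd_le_nadd_left (nadd_le_nadd_left (add_le_nadd _ _) _) _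
        _ = ω ^ c * j ♯ (ω ^ c * i ♯ (s ♯ r)) := by
            rw [nadd_left_comm r, nadd_comm r s]
        _ = ω ^ c * j ♯ (ω ^ c * i + (s ♯ r)) := by
            have h0 := nadd_opow_mul_aux c ih i i 0 (by omega) _ hw
            simp only [Nat.cast_zero, mul_zero, zero_add, Nat.add_zero] at h0
            rw [h0]
        _ = ω ^ c * (j + i : ℕ) + (s ♯ r) :=
            nadd_opow_mul_aux c ih (j + i) j i le_rfl _ hw
    refine key.trans_lt ?_
    calc ω ^ c * (j + i : ℕ) + (s ♯ r) < ω ^ c * (j + i : ℕ) + ω ^ c := add_lt_add_right hw _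
      _ = ω ^ c * ((j + i : ℕ) + 1) := (mul_add_one _ _).symm
      _ ≤ ω ^ c * ω := mul_le_mul_right
          (le_of_lt (by exact_mod_cast nat_lt_omega0 (j + i + 1))) _
  | limit γ hγ ih =>
    intro a ha b hb
    obtain ⟨c₁, hc₁, ha'⟩ := (lt_opow_of_isSuccLimit omega0_ne_zero hγ).1 ha
    obtain ⟨c₂, hc₂, hb'⟩ := (lt_opow_of_isSuccLimit omega0_ne_zero hγ).1 hb
    have hm : max c₁ c₂ < γ := max_lt hc₁ hc₂
    have h := ih (max c₁ c₂) hm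
      a (ha'.trans_le (opow_le_opow_right omega0_pos (le_max_left _ _)))
      b (hb'.trans_le (opow_le_opow_right omega0_pos (le_max_right _ _)))
    exact h.trans_le (opow_le_opow_right omega0_pos hm.le)

end IterNmulAux

namespace IterNmulAux

open Ordinal
open scoped NaturalOps Ordinal

theorem opow_mul_nat_nadd_opow_mul_nat (γ : Ordinal) (m k : ℕ) :
    ω ^ γ * m ♯ ω ^ γ * k = ω ^ γ * (m + k : ℕ) := by
  have h := nadd_opow_mul_aux γ (nadd_lt_opow γ) (m + k) m k le_rfl 0 (opow_pos γ omega0_pos)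
  simpa using h

theorem nmul_opow_omega0 : ∀ e c d : Ordinal, c ♯ d ≤ e → ω ^ c ⨳ ω ^ d = ω ^ (c ♯ d) := by
  intro e
  induction e using Ordinal.induction with
  | _ e IH =>
  intro c d hcd
  have fold : ∀ γ δ, γ ♯ δ < c ♯ d → ∀ m : ℕ, (ω ^ γ * m) ⨳ ω ^ δ = ω ^ (γ ♯ δ) * m := by
    intro γ δ hlt m
    have hK : ω ^ γ ⨳ ω ^ δ = ω ^ (γ ♯ δ) := IH (γ ♯ δ) (hlt.trans_le hcd) γ δ le_rfl
    induction m with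
    | zero => simp
    | succ m ihm =>
      have h1 : ω ^ γ * (m + 1 : ℕ) = ω ^ γ * m ♯ ω ^ γ := by
        rw [← opow_mul_nat_nadd_opow_mul_nat γ m 1]; simp
      have h2 : ω ^ (γ ♯ δ) * (m + 1 : ℕ) = ω ^ (γ ♯ δ) * m ♯ ω ^ (γ ♯ δ) := by
        rw [← opow_mul_nat_nadd_opow_mul_nat (γ ♯ δ) m 1]; simp
      rw [h1, h2, nadd_nmul, ihm, hK]
  have L : ∀ γ δ, γ ♯ δ = c ♯ d → ∀ x < ω ^ γ, x ⨳ ω ^ δ < ω ^ (γ ♯ δ) := by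
    intro γ δ heq x hx
    rcases eq_or_ne x 0 with rfl | hx0
    · rw [zero_nmul]; exact opow_pos _ omega0_pos
    have hc₁ : log ω x < γ := (lt_opow_iff_log_lt one_lt_omega0 hx0).1 hx
    have hxlt : x < ω ^ log ω x * ω := by
      have := lt_opow_succ_log_self one_lt_omega0 x
      rwa [opow_succ] at this
    obtain ⟨m', hm', hxm⟩ := (lt_mul_iff_of_isSuccLimit isSuccLimit_omega0).1 hxlt
    obtain ⟨m, rfl⟩ := Ordinal.lt_omega0.1 hm'
    have hfold := fold (log ω x) δ (by rw [← heq]; exact nadd_lt_nadd_right hc₁ δ) m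
    calc x ⨳ ω ^ δ ≤ (ω ^ log ω x * m) ⨳ ω ^ δ := nmul_le_nmul_right hxm.le _
      _ = ω ^ (log ω x ♯ δ) * m := hfold
      _ < ω ^ (log ω x ♯ δ) * ω := mul_lt_mul_of_pos_left (nat_lt_omega0 m) (opow_pos _ omega0_pos)
      _ = ω ^ ((log ω x ♯ δ) + 1) := (opow_succ _ _).symm
      _ ≤ ω ^ (γ ♯ δ) := opow_le_opow_right omega0_pos
          (Order.succ_le_iff.2 (nadd_lt_nadd_right hc₁ δ))
  apply le_antisymm
  · rw [nmul_le_iff]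
    intro x hx y hy
    have h1 : x ⨳ ω ^ d < ω ^ (c ♯ d) := L c d rfl x hx
    have h2 : ω ^ c ⨳ y < ω ^ (c ♯ d) := by
      rw [nmul_comm]
      have := L d c (nadd_comm d c) y hy
      rwa [nadd_comm d c] at this
    exact (nadd_lt_opow (c ♯ d) _ h1 _ h2).trans_le le_self_nadd
  · refine le_of_forall_lt fun z hz => ?_
    rcases eq_or_ne z 0 with rfl | hz0
    · calc (0 : Ordinal) < ω ^ c * ω ^ d :=
            mul_pos (opow_pos _ omega0_pos) (opow_pos _ omega0_pos)
        _ ≤ ω ^ c ⨳ ω ^ d := mul_le_nmul _ _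
    have he₁ : log ω z < c ♯ d := (lt_opow_iff_log_lt one_lt_omega0 hz0).1 hz
    have hzlt : z < ω ^ log ω z * ω := by
      have := lt_opow_succ_log_self one_lt_omega0 z
      rwa [opow_succ] at this
    obtain ⟨m', hm', hzm⟩ := (lt_mul_iff_of_isSuccLimit isSuccLimit_omega0).1 hzlt
    obtain ⟨m, rfl⟩ := Ordinal.lt_omega0.1 hm'
    rcases lt_nadd_iff.1 he₁ with ⟨c', hc', hce⟩ | ⟨d', hd', hde⟩
    · have hfold := fold c' d (nadd_lt_nadd_right hc' d) m
      have hle : ω ^ c' * m ≤ ω ^ c := by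
        calc ω ^ c' * m ≤ ω ^ c' * ω := mul_le_mul_right (nat_lt_omega0 m).le _
          _ = ω ^ (c' + 1) := (opow_succ _ _).symm
          _ ≤ ω ^ c := opow_le_opow_right omega0_pos (Order.succ_le_iff.2 hc')
      calc z < ω ^ log ω z * m := hzm
        _ ≤ ω ^ (c' ♯ d) * m := mul_le_mul_left (opow_le_opow_right omega0_pos hce) _
        _ = (ω ^ c' * m) ⨳ ω ^ d := hfold.symm
        _ ≤ ω ^ c ⨳ ω ^ d := nmul_le_nmul_right hle _
    · have hfold := fold d' c ((nadd_lt_nadd_right hd' c).trans_eq (nadd_comm d c)) m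
      have hle : ω ^ d' * m ≤ ω ^ d := by
        calc ω ^ d' * m ≤ ω ^ d' * ω := mul_le_mul_right (nat_lt_omega0 m).le _
          _ = ω ^ (d' + 1) := (opow_succ _ _).symm
          _ ≤ ω ^ d := opow_le_opow_right omega0_pos (Order.succ_le_iff.2 hd')
      calc z < ω ^ log ω z * m := hzm
        _ ≤ ω ^ (d' ♯ c) * m := mul_le_mul_left (opow_le_opow_right omega0_pos
            (by rwa [nadd_comm d' c])) _
        _ = (ω ^ d' * m) ⨳ ω ^ c := hfold.symm
        _ ≤ ω ^ d ⨳ ω ^ c := nmul_le_nmul_right hle _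
        _ = ω ^ c ⨳ ω ^ d := nmul_comm _ _

theorem nmul_opow (c d : Ordinal) : ω ^ c ⨳ ω ^ d = ω ^ (c ♯ d) :=
  nmul_opow_omega0 (c ♯ d) c d le_rfl

end IterNmulAux

namespace IterNmulAux

open Ordinal
open scoped NaturalOps Ordinal

theorem fold2 (c d : Ordinal) (m : ℕ) : (ω ^ c * m) ⨳ ω ^ d = ω ^ (c ♯ d) * m := by
  induction m with
  | zero => simp
  | succ m ihm =>
    have h1 : ω ^ c * (m + 1 : ℕ) = ω ^ c * m ♯ ω ^ c := by
      rw [← opow_mul_nat_nadd_opow_mul_nat c m 1]; simp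
    have h2 : ω ^ (c ♯ d) * (m + 1 : ℕ) = ω ^ (c ♯ d) * m ♯ ω ^ (c ♯ d) := by
      rw [← opow_mul_nat_nadd_opow_mul_nat (c ♯ d) m 1]; simp
    rw [h1, h2, nadd_nmul, ihm, nmul_opow]

theorem fold3 (c d : Ordinal) (m k : ℕ) :
    (ω ^ c * m) ⨳ (ω ^ d * k) = ω ^ (c ♯ d) * (m * k : ℕ) := by
  induction k with
  | zero => simp
  | succ k ihk =>
    have h1 : ω ^ d * (k + 1 : ℕ) = ω ^ d * k ♯ ω ^ d := by
      rw [← opow_mul_nat_nadd_opow_mul_nat d k 1]; simp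
    rw [h1, nmul_nadd, ihk, fold2, opow_mul_nat_nadd_opow_mul_nat]
    congr 1

/-- `ω ^ (ω ^ e)` is closed under natural multiplication. -/
theorem nmul_lt_opow_opow (e : Ordinal) {a b : Ordinal}
    (ha : a < ω ^ ω ^ e) (hb : b < ω ^ ω ^ e) : a ⨳ b < ω ^ ω ^ e := by
  rcases eq_or_ne a 0 with rfl | ha0
  · rw [zero_nmul]; exact opow_pos _ omega0_pos
  rcases eq_or_ne b 0 with rfl | hb0
  · rw [nmul_zero]; exact opow_pos _ omega0_pos
  have hc₁ : log ω a < ω ^ e := (lt_opow_iff_log_lt one_lt_omega0 ha0).1 ha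
  have hd₁ : log ω b < ω ^ e := (lt_opow_iff_log_lt one_lt_omega0 hb0).1 hb
  obtain ⟨m', hm', ham⟩ := (lt_mul_iff_of_isSuccLimit isSuccLimit_omega0).1
    (by rw [← opow_succ]; exact lt_opow_succ_log_self one_lt_omega0 a)
  obtain ⟨m, rfl⟩ := Ordinal.lt_omega0.1 hm'
  obtain ⟨k', hk', hbk⟩ := (lt_mul_iff_of_isSuccLimit isSuccLimit_omega0).1
    (by rw [← opow_succ]; exact lt_opow_succ_log_self one_lt_omega0 b)
  obtain ⟨k, rfl⟩ := Ordinal.lt_omega0.1 hk'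
  have hsum : log ω a ♯ log ω b < ω ^ e := nadd_lt_opow e _ hc₁ _ hd₁
  calc a ⨳ b ≤ (ω ^ log ω a * m) ⨳ (ω ^ log ω b * k) :=
        (nmul_le_nmul_right ham.le _).trans (nmul_le_nmul_left hbk.le _)
    _ = ω ^ (log ω a ♯ log ω b) * (m * k : ℕ) := fold3 _ _ _ _
    _ < ω ^ (log ω a ♯ log ω b) * ω :=
        mul_lt_mul_of_pos_left (nat_lt_omega0 _) (opow_pos _ omega0_pos)
    _ = ω ^ ((log ω a ♯ log ω b) + 1) := (opow_succ _ _).symm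
    _ ≤ ω ^ ω ^ e := opow_le_opow_right omega0_pos (Order.succ_le_iff.2 hsum)

end IterNmulAux

namespace IterNmulAux

open Ordinal
open scoped NaturalOps Ordinal

theorem iterNmul_zero (α : Ordinal) : iterNmul α 0 = 1 :=
  Ordinal.limitRecOn_zero _ _ _

theorem iterNmul_succ (α b : Ordinal) :
    iterNmul α (b + 1) = (iterNmul α b) ⨳ α :=
  Ordinal.limitRecOn_add_one _ _ _ _

theorem iterNmul_limit (α l : Ordinal) (hl : Order.IsSuccLimit l) :
    iterNmul α l = ⨆ γ : Set.Iio l, iterNmul α γ.1 :=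
  Ordinal.limitRecOn_limit _ _ _ _ hl

theorem omegaTower_pos (n : ℕ) : 0 < omegaTower n := by
  cases n with
  | zero => exact zero_lt_one
  | succ n => exact opow_pos _ omega0_pos

theorem omegaTower_isLimit (n : ℕ) (hn : 1 ≤ n) : Order.IsSuccLimit (omegaTower n) := by
  obtain ⟨m, rfl⟩ := Nat.exists_eq_add_of_le' hn
  exact isSuccLimit_opow_left isSuccLimit_omega0 (omegaTower_pos m).ne'

universe v

theorem lift_ne_zero' {a : Ordinal.{v}} (h : a ≠ 0) : Ordinal.lift.{u} a ≠ 0 := by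
  intro hz
  apply h
  apply Ordinal.lift_inj.1
  rw [hz, lift_zero]

theorem lift_opow (a b : Ordinal.{v}) :
    Ordinal.lift.{u} (a ^ b) = Ordinal.lift.{u} a ^ Ordinal.lift.{u} b := by
  induction b using Ordinal.limitRecOn with
  | zero => simp
  | add_one b ih => rw [opow_add_one, lift_mul, ih, lift_add_one, opow_add_one]
  | limit b hb ih =>
    rcases eq_or_ne a 0 with rfl | ha0
    · rw [zero_opow hb.pos.ne', lift_zero, zero_opow (lift_ne_zero' hb.pos.ne')]
    rcases eq_or_ne a 1 with rfl | ha1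
    · rw [one_opow, lift_one, one_opow]
    have ha : 1 < a := lt_of_le_of_ne (Ordinal.one_le_iff_ne_zero.2 ha0) (Ne.symm ha1)
    have hla : 1 < Ordinal.lift.{u} a := by
      have h := lift_lt.2 ha
      rwa [lift_one] at h
    apply le_antisymm
    · refine le_of_forall_lt fun z hz => ?_
      obtain ⟨z', rfl⟩ := Ordinal.mem_range_lift_of_le hz.le
      rw [lift_lt] at hz
      obtain ⟨b', hb', hz'⟩ := (lt_opow_of_isSuccLimit ha0 hb).1 hz
      calc Ordinal.lift.{u} z' < Ordinal.lift.{u} (a ^ b') := lift_lt.2 hz'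
        _ = Ordinal.lift.{u} a ^ Ordinal.lift.{u} b' := ih b' hb'
        _ ≤ Ordinal.lift.{u} a ^ Ordinal.lift.{u} b :=
            opow_le_opow_right (zero_lt_one.trans hla) (lift_le.2 hb'.le)
    · refine le_of_forall_lt fun z hz => ?_
      have hlb : Order.IsSuccLimit (Ordinal.lift.{u} b) := isSuccLimit_lift.2 hb
      have hla0 : Ordinal.lift.{u} a ≠ 0 := lift_ne_zero' ha0
      obtain ⟨w, hw, hzw⟩ := (lt_opow_of_isSuccLimit hla0 hlb).1 hz
      obtain ⟨w', rfl⟩ := Ordinal.mem_range_lift_of_le hw.le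
      rw [lift_lt] at hw
      calc z < Ordinal.lift.{u} a ^ Ordinal.lift.{u} w' := hzw
        _ = Ordinal.lift.{u} (a ^ w') := (ih w' hw).symm
        _ ≤ Ordinal.lift.{u} (a ^ b) :=
            lift_le.2 (opow_le_opow_right (zero_lt_one.trans ha) hw.le)

theorem lift_omegaTower (n : ℕ) :
    Ordinal.lift.{u} (omegaTower.{v} n) = omegaTower.{max v u} n := by
  induction n with
  | zero => exact lift_one
  | succ n ih =>
    show Ordinal.lift.{u} (ω ^ omegaTower.{v} n) = ω ^ omegaTower.{max v u} n
    rw [lift_opow, lift_omega0, ih]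

/-- The key quantitative bound: if `x ≤ ω ^ δ` then the `β`-fold iterated
natural product of `x` is at most `ω ^ (δ ⨳ b)` for `b` a copy of `β`. -/
theorem iterNmul_le_opow_nmul {x δ : Ordinal.{u}} (hx : x ≤ ω ^ δ) :
    ∀ (β : Ordinal.{v}) (b : Ordinal.{u}),
      Ordinal.lift.{u} β = Ordinal.lift.{v} b → iterNmul x β ≤ ω ^ (δ ⨳ b) := by
  intro β
  induction β using Ordinal.limitRecOn with
  | zero =>
    intro b hb
    rw [lift_zero] at hb
    have hb0 : b = 0 := by
      by_contra h
      exact lift_ne_zero' h hb.symm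
    subst hb0
    rw [iterNmul_zero, nmul_zero, opow_zero]
  | add_one β₀ ih =>
    intro b hb
    rw [lift_add_one] at hb
    have hlt : Ordinal.lift.{u} β₀ < Ordinal.lift.{v} b := hb ▸ Order.lt_succ _
    obtain ⟨b₀, hb₀⟩ := Ordinal.mem_range_lift_of_le hlt.le
    have hbsucc : b₀ + 1 = b := by
      apply Ordinal.lift_inj.1
      rw [lift_add_one, hb₀, hb]
    subst hbsucc
    have h0 := ih b₀ hb₀.symm
    rw [iterNmul_succ, show b₀ + 1 = Order.succ b₀ from rfl, nmul_succ, ← nmul_opow]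
    exact (nmul_le_nmul_right h0 _).trans (nmul_le_nmul_left hx _)
  | limit l hl ih =>
    intro b hb
    rw [iterNmul_limit x l hl]
    have : Nonempty (Set.Iio l) := ⟨⟨0, hl.pos⟩⟩
    refine ciSup_le' fun γ => ?_
    have hγ : Ordinal.lift.{u} γ.1 < Ordinal.lift.{v} b := by
      rw [← hb, lift_lt]; exact γ.2
    obtain ⟨g, hg⟩ := Ordinal.mem_range_lift_of_le hγ.le
    have hgb : g < b := by rwa [← lift_lt.{v}, hg]
    exact (ih γ.1 γ.2 g hg.symm).trans
      (opow_le_opow_right omega0_pos (nmul_le_nmul_left hgb.le δ))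

end IterNmulAux

/-- Let `2 ≤ n`. If `α < ω_{n+1}` and `β < ω_n`, then
`(α^ω)^{⊙β} < ω_{n+1}`. -/
theorem iterNmul_opow_omega_lt (n : ℕ) (hn : 2 ≤ n) (α β : Ordinal)
    (hα : α < omegaTower (n + 1)) (hβ : β < omegaTower n) :
    iterNmul (α ^ Ordinal.omega0) β < omegaTower (n + 1) := by
  open Ordinal IterNmulAux in
  open scoped NaturalOps Ordinal in
  obtain ⟨m, rfl⟩ := Nat.exists_eq_add_of_le' hn
  -- transfer β to the universe of α
  obtain ⟨b, hb, hβ'⟩ : ∃ b : Ordinal.{u_1},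
      Ordinal.lift.{u_2} b = Ordinal.lift.{u_1} β ∧ b < omegaTower.{u_1} (m + 2) := by
    have h1 : Ordinal.lift.{u_1} β < Ordinal.lift.{u_2} (omegaTower.{u_1} (m + 2)) := by
      rw [lift_omegaTower]
      have h2 := lift_lt.{u_1}.2 hβ
      rwa [lift_omegaTower] at h2
    obtain ⟨b, hb⟩ := Ordinal.mem_range_lift_of_le h1.le
    refine ⟨b, hb, ?_⟩
    have h3 : Ordinal.lift.{u_2} b < Ordinal.lift.{u_2} (omegaTower.{u_1} (m + 2)) := by
      rw [hb]; exact h1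
    exact lift_lt.1 h3
  have hT1 : omegaTower (m + 2 + 1) = ω ^ omegaTower (m + 2) := rfl
  have hTlim : Order.IsSuccLimit (omegaTower.{u_1} (m + 2)) := omegaTower_isLimit _ (by omega)
  have hTlim' : Order.IsSuccLimit (omegaTower.{u_1} (m + 1)) := omegaTower_isLimit _ (by omega)
  rw [hT1] at hα
  obtain ⟨c, hc, hαc⟩ := (lt_opow_of_isSuccLimit omega0_ne_zero hTlim).1 hα
  have hδbound : α ^ ω ≤ ω ^ (c * ω) := by
    rw [opow_mul]
    exact opow_le_opow_left ω hαc.le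
  have hδlt : c * ω < omegaTower.{u_1} (m + 2) := by
    have hn1 : omegaTower.{u_1} (m + 2) = ω ^ omegaTower.{u_1} (m + 1) := rfl
    rw [hn1] at hc ⊢
    obtain ⟨c', hc', hcc'⟩ := (lt_opow_of_isSuccLimit omega0_ne_zero hTlim').1 hc
    calc c * ω ≤ ω ^ c' * ω := mul_le_mul_left hcc'.le ω
      _ = ω ^ (c' + 1) := (opow_succ _ _).symm
      _ < ω ^ omegaTower.{u_1} (m + 1) :=
        (opow_lt_opow_iff_right one_lt_omega0).2 (hTlim'.succ_lt hc')
  have hnm : (c * ω) ⨳ b < omegaTower.{u_1} (m + 2) := by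
    have hn2 : omegaTower.{u_1} (m + 2) = ω ^ ω ^ omegaTower.{u_1} m := rfl
    rw [hn2] at hδlt hβ' ⊢
    exact nmul_lt_opow_opow _ hδlt hβ'
  calc iterNmul (α ^ ω) β ≤ ω ^ ((c * ω) ⨳ b) :=
        iterNmul_le_opow_nmul hδbound β b hb.symm
    _ < ω ^ omegaTower.{u_1} (m + 2) := (opow_lt_opow_iff_right one_lt_omega0).2 hnm
    _ = omegaTower (m + 2 + 1) := rfl
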